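/- Let k be a field, p ≥ 2 an integer and c ∈ k a nonzero element. Let A = k[x]/(x^p − c·x) and let ε : A → k be the k-algebra homomorphism with ε(x) = 0. Then the left annihilator of the augmentation ideal, {a ∈ A : a·b = 0 for all b ∈ ker ε}, is exactly the one-dimensional k-subspace spanned by π = x^{p−1} − c; moreover ε(π) = −c, which is nonzero. -/

import Mathlib

/-!
Let `k` be a field, `p ≥ 2` an integer and `c : k` nonzero.  Let `A = k[x]/(x^p - c·x)` and
let `ε : A → k` be the `k`-algebra homomorphism with `ε x = 0`.

STATEMENT 12: the left annihilator of the augmentation ideal,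
`{a : A | a * b = 0 for all b ∈ ker ε}`, is exactly the one-dimensional `k`-subspace spanned
by `π = x^{p-1} - c` (in particular `π ≠ 0`); moreover `ε π = -c`, which is nonzero.
-/

open Polynomial

noncomputable section

variable (k : Type*) [Field k] (p : ℕ) (c : k)

/-- The ideal `(x^p - c·x)`. -/
def relIdeal : Ideal (Polynomial k) :=
  Ideal.span {(X : Polynomial k) ^ p - C c * X}

/-- The algebra `A = k[x]/(x^p - c·x)`. -/
abbrev RelAlg := Polynomial k ⧸ relIdeal k p c

/-- The augmentation `ε : A → k`, the `k`-algebra map sending `x` to `0`; it is induced by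
evaluation of polynomials at `0`. -/
def relAug (hp : 2 ≤ p) : RelAlg k p c →ₐ[k] k :=
  Ideal.Quotient.liftₐ (relIdeal k p c) (aeval 0) (by
    intro a ha
    have h : relIdeal k p c ≤ RingHom.ker (aeval (0 : k)).toRingHom := by
      rw [relIdeal, Ideal.span_le]
      rintro _ rfl
      have h0 : (0 : k) ^ p = 0 := zero_pow (by omega)
      simp [RingHom.mem_ker, h0]
    exact h ha)

/-- The class `π = x^{p-1} - c` in `A`. -/
def relTop : RelAlg k p c :=
  Ideal.Quotient.mkₐ k (relIdeal k p c) ((X : Polynomial k) ^ (p - 1) - C c)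

theorem statement12 (hp : 2 ≤ p) (hc : c ≠ 0) :
    relTop k p c ≠ 0 ∧
      {a : RelAlg k p c | ∀ b : RelAlg k p c, relAug k p c hp b = 0 → a * b = 0} =
        (Submodule.span k {relTop k p c} : Submodule k (RelAlg k p c)) ∧
      relAug k p c hp (relTop k p c) = -c ∧ relAug k p c hp (relTop k p c) ≠ 0 := by

  have hp1 : p - 1 + 1 = p := Nat.sub_add_cancel (by omega)
  have hp1ne : p - 1 ≠ 0 := by omega
  set I := relIdeal k p c with hI
  have key : ((X : Polynomial k) ^ (p - 1) - C c) * X = X ^ p - C c * X := by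
    rw [sub_mul, ← pow_succ, hp1]
  have hmem : ((X : Polynomial k) ^ p - C c * X) ∈ I :=
    Ideal.subset_span rfl
  have haug : ∀ f : Polynomial k,
      relAug k p c hp (Ideal.Quotient.mk I f) = aeval (0 : k) f := by
    intro f
    simp [relAug, Ideal.Quotient.liftₐ_apply, Ideal.Quotient.lift_mk]
    rfl
  have hπ : relTop k p c = Ideal.Quotient.mk I ((X : Polynomial k) ^ (p - 1) - C c) := by
    simp [relTop, Ideal.Quotient.mkₐ_eq_mk]
    rfl
  have hπx : relTop k p c * Ideal.Quotient.mk I X = 0 := by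
    rw [hπ, ← map_mul, key, Ideal.Quotient.eq_zero_iff_mem]
    exact hmem
  -- ε π = -c
  have hεπ : relAug k p c hp (relTop k p c) = -c := by
    rw [hπ, haug]
    simp [zero_pow hp1ne]
  refine ⟨?_, ?_, hεπ, by rw [hεπ]; simpa using hc⟩
  · -- π ≠ 0
    rw [hπ]
    intro h0
    rw [Ideal.Quotient.eq_zero_iff_mem, hI, relIdeal, Ideal.mem_span_singleton] at h0
    have hne : ((X : Polynomial k) ^ (p - 1) - C c) ≠ 0 := by
      intro h
      have := congrArg (fun q => Polynomial.coeff q (p - 1)) h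
      simp [coeff_X_pow, Polynomial.coeff_C, hp1ne] at this
    have hdeg := Polynomial.natDegree_le_of_dvd h0 hne
    have hd1 : ((X : Polynomial k) ^ p - C c * X).natDegree = p := by
      rw [Polynomial.natDegree_sub_eq_left_of_natDegree_lt, natDegree_X_pow]
      calc (C c * (X : Polynomial k)).natDegree ≤ (X : Polynomial k).natDegree :=
            natDegree_C_mul_le _ _
        _ = 1 := natDegree_X
        _ < ((X : Polynomial k) ^ p).natDegree := by rw [natDegree_X_pow]; omega
    have hd2 : ((X : Polynomial k) ^ (p - 1) - C c).natDegree ≤ p - 1 := by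
      refine le_trans (Polynomial.natDegree_sub_le _ _) ?_
      simp [natDegree_X_pow]
    omega
  · -- the set equality
    ext a
    simp only [Set.mem_setOf_eq, SetLike.mem_coe]
    constructor
    · intro ha
      obtain ⟨f, rfl⟩ := Ideal.Quotient.mk_surjective (I := I) a
      have hxb : relAug k p c hp (Ideal.Quotient.mk I X) = 0 := by
        rw [haug]; simp
      have hax := ha _ hxb
      rw [← map_mul, Ideal.Quotient.eq_zero_iff_mem, hI, relIdeal,
        Ideal.mem_span_singleton] at hax
      obtain ⟨g, hg⟩ := hax
      have hfac : f = ((X : Polynomial k) ^ (p - 1) - C c) * g := by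
        have hx : (X : Polynomial k) ≠ 0 := X_ne_zero
        apply mul_right_cancel₀ hx
        rw [hg, ← key]; ring
      rw [Submodule.mem_span_singleton]
      refine ⟨g.coeff 0, ?_⟩
      have hgsplit : (X : Polynomial k) * g.divX + C (g.coeff 0) = g :=
        Polynomial.X_mul_divX_add g
      have hsmul : ∀ (r : k) (q : Polynomial k),
          Ideal.Quotient.mk I (C r * q) = r • Ideal.Quotient.mk I q := by
        intro r q
        rw [← Polynomial.smul_eq_C_mul, ← Ideal.Quotient.mkₐ_eq_mk (R₁ := k), map_smul]
      have hgoal : Ideal.Quotient.mk I f = g.coeff 0 • relTop k p c := by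
        conv_lhs => rw [hfac, ← hgsplit]
        rw [mul_add, map_add, map_mul, map_mul, ← mul_assoc, ← hπ, hπx, zero_mul,
          zero_add, mul_comm, hsmul, ← hπ]
      exact hgoal.symm
    · intro ha b hb
      rw [Submodule.mem_span_singleton] at ha
      obtain ⟨r, rfl⟩ := ha
      obtain ⟨f, rfl⟩ := Ideal.Quotient.mk_surjective (I := I) b
      rw [haug] at hb
      have hb0 : f.coeff 0 = 0 := by
        simpa [aeval_def, eval₂_at_apply, Polynomial.coeff_zero_eq_eval_zero] using hb
      have hfsplit : (X : Polynomial k) * f.divX = f := by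
        have := Polynomial.X_mul_divX_add f
        rwa [hb0, map_zero, add_zero] at this
      rw [smul_mul_assoc, ← hfsplit, map_mul, ← mul_assoc, hπx]
      simp
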